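/- For any probability measure μ and p, s real with 2 ≤ s, the derivative bound d/ds [log(2·b₀^p·(b₀π)^{-s/2} s^{p/2+2}/(s/2 - p))] < -½log(b₀π) + 3/(2s) holds for 0 < p < 1, s > 3 and b₀ = 1.295; in particular this logarithmic derivative is negative for s > 3. -/

import Mathlib

open Real

theorem stmt18 (p s : ℝ) (hp0 : 0 < p) (hp1 : p < 1) (hs : 3 < s) :
    deriv (fun u : ℝ =>
        Real.log (2 * (1.295 : ℝ) ^ p * (1.295 * Real.pi) ^ (-u / 2) * u ^ (p / 2 + 2) /
          (u / 2 - p))) s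
      < -(1 / 2) * Real.log (1.295 * Real.pi) + 3 / (2 * s) ∧
    deriv (fun u : ℝ =>
        Real.log (2 * (1.295 : ℝ) ^ p * (1.295 * Real.pi) ^ (-u / 2) * u ^ (p / 2 + 2) /
          (u / 2 - p))) s < 0 := by
  have hpi : (3.14 : ℝ) < Real.pi := by linarith [Real.pi_gt_d6]
  have hA : (2.72 : ℝ) < 1.295 * Real.pi := by nlinarith
  have hs0 : (0:ℝ) < s := by linarith
  have hsp : 0 < s / 2 - p := by linarith
  have hev : (fun u : ℝ =>
        Real.log (2 * (1.295 : ℝ) ^ p * (1.295 * Real.pi) ^ (-u / 2) * u ^ (p / 2 + 2) /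
          (u / 2 - p)))
      =ᶠ[nhds s] (fun u => Real.log 2 + p * Real.log 1.295
        + (-u / 2) * Real.log (1.295 * Real.pi) + (p / 2 + 2) * Real.log u
        - Real.log (u / 2 - p)) := by
    filter_upwards [eventually_gt_nhds hs] with u hu
    have hu0 : (0:ℝ) < u := by linarith
    have hup : 0 < u / 2 - p := by linarith
    have h1 : (0:ℝ) < 1.295 := by norm_num
    have hApos : (0:ℝ) < 1.295 * Real.pi := by positivity
    rw [Real.log_div (by positivity) (ne_of_gt hup),
        Real.log_mul (by positivity) (by positivity),
        Real.log_mul (by positivity) (by positivity),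
        Real.log_mul (by norm_num) (by positivity),
        Real.log_rpow hApos, Real.log_rpow h1, Real.log_rpow hu0]
  have h1 : HasDerivAt (fun u : ℝ => -u / 2) (-1 / 2) s :=
    (hasDerivAt_id s).neg.div_const 2
  have h2 : HasDerivAt (fun u : ℝ => (-u / 2) * Real.log (1.295 * Real.pi))
      (-1 / 2 * Real.log (1.295 * Real.pi)) s := h1.mul_const _
  have h3 : HasDerivAt (fun u : ℝ => (p / 2 + 2) * Real.log u)
      ((p / 2 + 2) * s⁻¹) s :=
    (Real.hasDerivAt_log (ne_of_gt hs0)).const_mul _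
  have h4 : HasDerivAt (fun u : ℝ => u / 2 - p) (1/2) s := by
    simpa using ((hasDerivAt_id s).div_const 2).sub_const p
  have h5 : HasDerivAt (fun u : ℝ => Real.log (u / 2 - p)) ((1/2) / (s / 2 - p)) s :=
    h4.log (ne_of_gt hsp)
  have hd : HasDerivAt (fun u : ℝ => Real.log 2 + p * Real.log 1.295
        + (-u / 2) * Real.log (1.295 * Real.pi) + (p / 2 + 2) * Real.log u
        - Real.log (u / 2 - p))
      (0 + -(1/2) * Real.log (1.295 * Real.pi) + (p / 2 + 2) * (1 / s)
        - (1/2) / (s / 2 - p)) s := by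
    have h := (((hasDerivAt_const s (Real.log 2 + p * Real.log 1.295)).add h2).add h3).sub h5
    exact h.congr_deriv (by ring)
  have hderiv : deriv (fun u : ℝ =>
        Real.log (2 * (1.295 : ℝ) ^ p * (1.295 * Real.pi) ^ (-u / 2) * u ^ (p / 2 + 2) /
          (u / 2 - p))) s
      = 0 + -(1/2) * Real.log (1.295 * Real.pi) + (p / 2 + 2) * (1 / s)
        - (1/2) / (s / 2 - p) := by
    rw [hev.deriv_eq, hd.deriv]
  have e1 : (p / 2 + 2) * (1 / s) - 3 / (2 * s) = (p + 1) / (2 * s) := by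
    field_simp; ring
  have e2 : (p + 1) / (2 * s) < (1/2) / (s / 2 - p) := by
    rw [div_lt_div_iff₀ (by linarith) hsp]
    nlinarith
  have hlogA : 1 < Real.log (1.295 * Real.pi) := by
    have he : Real.exp 1 < 1.295 * Real.pi := by
      have := Real.exp_one_lt_d9
      nlinarith
    calc (1:ℝ) = Real.log (Real.exp 1) := (Real.log_exp 1).symm
      _ < Real.log (1.295 * Real.pi) := Real.log_lt_log (Real.exp_pos 1) he
  have hfrac : 3 / (2 * s) < 1 / 2 := by
    rw [div_lt_div_iff₀ (by linarith) (by norm_num)]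
    linarith
  constructor
  · rw [hderiv]; linarith
  · rw [hderiv]; linarith
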